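/- Let A be a graded associative algebra and D a differential operator on A of noncommutative order at most l (i.e., b_{l+1}^D = 0). Then for every n ≥ l+1 and homogeneous a_1,…,a_n ∈ A, D(a_1 a_2 ⋯ a_n) = Σ_{k=1}^{n-l+1} (−1)^{|D|(|a_1|+⋯+|a_{k-1}|)} a_1⋯a_{k-1} D(a_k⋯a_{k+l-1}) a_{k+l}⋯a_n − Σ_{k=2}^{n-l+1} (−1)^{|D|(|a_1|+⋯+|a_{k-1}|)} a_1⋯a_{k-1} D(a_k⋯a_{k+l-2}) a_{k+l-1}⋯a_n. -/

import Mathlib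

/-- Product of a nonempty list of elements of a (possibly non-unital) ring,
junk value `0` on `[]`. -/
def listProd {A : Type*} [NonUnitalRing A] : List A → A
  | [] => 0
  | a :: t => t.foldl (· * ·) a

/-- The Börjeson product `b_n^D(a₁, mid, aₙ)` (with `n = mid.length + 2 ≥ 2`), where
`ε = (−1)^{|a₁||D|}` is the Koszul sign attached to the first argument. -/
def bor {A : Type*} [NonUnitalRing A] (D : A → A) (ε : ℤˣ) (a1 : A) (mid : List A)
    (an : A) : A :=
  D (listProd (a1 :: (mid ++ [an]))) - D (listProd (a1 :: mid)) * an
    - (ε : ℤ) • (a1 * D (listProd (mid ++ [an])))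
    + (ε : ℤ) • (a1 * D (listProd mid) * an)

section
variable {A : Type*} [NonUnitalRing A]

lemma foldl_mul_eq (t : List A) (ht : t ≠ []) (a : A) :
    t.foldl (· * ·) a = a * listProd t := by
  induction t generalizing a with
  | nil => simp at ht
  | cons b t ih =>
    cases t with
    | nil => simp [listProd]
    | cons c t' =>
      rw [List.foldl_cons, ih (by simp)]
      show (a * b) * listProd (c :: t') = a * listProd (b :: c :: t')
      rw [show listProd (b :: c :: t') = b * listProd (c :: t') from ih (by simp) b,
        mul_assoc]

lemma listProd_cons_ne (a : A) {t : List A} (ht : t ≠ []) :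
    listProd (a :: t) = a * listProd t := foldl_mul_eq t ht a

lemma listProd_append {xs ys : List A} (hx : xs ≠ []) (hy : ys ≠ []) :
    listProd (xs ++ ys) = listProd xs * listProd ys := by
  cases xs with
  | nil => simp at hx
  | cons x xs' =>
    show (xs' ++ ys).foldl (· * ·) x = _
    rw [List.foldl_append, foldl_mul_eq ys hy]
    rfl

lemma listProd_singleton (a : A) : listProd [a] = a := rfl

lemma listProd_pair (x y : A) : listProd [x, y] = x * y := rfl

lemma listProd_triple (x y z : A) : listProd [x, y, z] = x * y * z := rfl

lemma listProd_append_prod {xs ys : List A} (hy : ys ≠ []) :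
    listProd (xs ++ [listProd ys]) = listProd (xs ++ ys) := by
  cases xs with
  | nil => simp [listProd_singleton]
  | cons x xs' =>
    rw [listProd_append (by simp) (by simp), listProd_singleton,
      listProd_append (by simp) hy]

lemma homog_listProd (homog : A → Prop)
    (hmul : ∀ a b : A, homog a → homog b → homog (a * b))
    (t : List A) (ht : t ≠ []) (h : ∀ x ∈ t, homog x) : homog (listProd t) := by
  induction t with
  | nil => simp at ht
  | cons a t ih =>
    cases t with
    | nil => exact h a (by simp)
    | cons b t' =>
      rw [listProd_cons_ne _ (by simp)]
      exact hmul _ _ (h a (by simp)) (ih (by simp) fun x hx => h x (by simp [hx]))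

end

lemma sum_Icc_range {M : Type*} [AddCommMonoid M] (f : ℕ → M) (a b : ℕ) :
    ∑ i ∈ Finset.Icc a b, f i = ∑ i ∈ Finset.range (b + 1 - a), f (a + i) := by
  rw [← Finset.Ico_add_one_right_eq_Icc, Finset.sum_Ico_eq_sum_range]

lemma sum_Icc_split {M : Type*} [AddCommMonoid M] (f : ℕ → M) (a b a' : ℕ) (h : a ≤ b)
    (h2 : a' = a + 1) :
    ∑ i ∈ Finset.Icc a b, f i = f a + ∑ i ∈ Finset.Icc a' b, f i := by
  subst h2
  rw [← Finset.Ico_add_one_right_eq_Icc, ← Finset.Ico_add_one_right_eq_Icc, Finset.sum_eq_sum_Ico_succ_bot (by omega)]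

lemma sum_Icc_shift {M : Type*} [AddCommMonoid M] (f : ℕ → M) (a b a' b' : ℕ)
    (h1 : a' = a + 1) (h2 : b' = b + 1) :
    ∑ i ∈ Finset.Icc a' b', f i = ∑ i ∈ Finset.Icc a b, f (i + 1) := by
  subst h1 h2
  rw [← Finset.map_add_right_Icc, Finset.sum_map]
  rfl

lemma shift_term {A : Type*} [NonUnitalRing A] (f : A → ℤˣ) (a1 : A) (rest : List A)
    (j p : ℕ) (z : A) :
    (((List.map f (List.take (j + 1) (a1 :: rest))).prod : ℤˣ) : ℤ) •
      listProd (List.take (j + 1) (a1 :: rest) ++ z :: List.drop (j + 1 + p) (a1 :: rest))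
    = ((f a1 : ℤˣ) : ℤ) • (a1 * ((((List.map f (List.take j rest)).prod : ℤˣ) : ℤ) •
        listProd (List.take j rest ++ z :: List.drop (j + p) rest))) := by
  rw [List.take_succ_cons, show j + 1 + p = (j + p) + 1 from by omega, List.drop_succ_cons,
    List.map_cons, List.prod_cons, Units.val_mul, mul_smul]
  congr 1
  rw [mul_smul_comm]
  congr 1
  rw [List.cons_append, listProd_cons_ne _ (by simp)]

/-- If `D` is a differential operator of noncommutative order at most `l` on a graded
associative algebra `A` (i.e. `b_{l+1}^D = 0`), then for every `n ≥ l+1` and homogeneous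
`a₁,…,aₙ`:
`D(a₁⋯aₙ) = Σ_{k=1}^{n-l+1} (−1)^{|D|(|a₁|+⋯+|a_{k-1}|)} a₁⋯a_{k-1} D(a_k⋯a_{k+l-1}) a_{k+l}⋯aₙ
 − Σ_{k=2}^{n-l+1} (−1)^{|D|(|a₁|+⋯+|a_{k-1}|)} a₁⋯a_{k-1} D(a_k⋯a_{k+l-2}) a_{k+l-1}⋯aₙ`. -/
theorem stmt10 {A : Type*} [NonUnitalRing A] (D : A →+ A) (deg : A → ℤ) (dD : ℤ)
    (homog : A → Prop)
    (hmul : ∀ a b : A, homog a → homog b → homog (a * b))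
    (hdeg : ∀ a b : A, homog a → homog b → deg (a * b) = deg a + deg b)
    (l : ℕ) (hl : 1 ≤ l)
    (hord : ∀ (a1 : A) (mid : List A) (an : A), mid.length = l - 1 →
      homog a1 → (∀ x ∈ mid, homog x) → homog an →
      bor (⇑D) ((-1 : ℤˣ) ^ (dD * deg a1)) a1 mid an = 0)
    (n : ℕ) (hn : l + 1 ≤ n) (as : List A) (hlen : as.length = n)
    (hhom : ∀ x ∈ as, homog x) :
    D (listProd as) =
      (∑ k ∈ Finset.Icc 1 (n - l + 1),
        ((((as.take (k - 1)).map fun a => (-1 : ℤˣ) ^ (dD * deg a)).prod : ℤˣ) : ℤ) •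
          listProd (as.take (k - 1) ++
            D (listProd ((as.drop (k - 1)).take l)) :: as.drop (k - 1 + l)))
      - ∑ k ∈ Finset.Icc 2 (n - l + 1),
        ((((as.take (k - 1)).map fun a => (-1 : ℤˣ) ^ (dD * deg a)).prod : ℤˣ) : ℤ) •
          listProd (as.take (k - 1) ++
            D (listProd ((as.drop (k - 1)).take (l - 1))) :: as.drop (k - 1 + (l - 1))) := by
  obtain ⟨m, rfl⟩ : ∃ m, l = m + 1 := ⟨l - 1, by omega⟩
  clear hl hdeg
  induction n, hn using Nat.le_induction generalizing as with
  | base =>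
    obtain ⟨a1, t, rfl⟩ : ∃ a t, as = a :: t := by
      cases as with
      | nil => simp at hlen
      | cons a t => exact ⟨a, t, rfl⟩
    have htne : t ≠ [] := by
      intro h; subst h; simp at hlen
    obtain ⟨mid, an, rfl⟩ : ∃ mid an, t = mid ++ [an] :=
      ⟨t.dropLast, t.getLast htne, (List.dropLast_append_getLast htne).symm⟩
    have hmid : mid.length = m := by simp at hlen; omega
    have ha1 : homog a1 := hhom _ (by simp)
    have hmidh : ∀ x ∈ mid, homog x := fun x hx => hhom x (by simp [hx])
    have han : homog an := hhom _ (by simp)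
    have h := hord a1 mid an (by simp [hmid]) ha1 hmidh han
    rw [show m + 1 + 1 - (m + 1) + 1 = 2 from by omega]
    rw [sum_Icc_range, sum_Icc_range]
    norm_num [Finset.sum_range_succ]
    rw [List.take_left' hmid, List.drop_left' hmid,
      List.take_of_length_le (by simp [hmid] : (mid ++ [an]).length ≤ m + 1),
      List.drop_eq_nil_of_le
        (by simp [hmid] : (a1 :: (mid ++ [an])).length ≤ 1 + (m + 1)),
      show 1 + m = m + 1 from by omega, List.drop_succ_cons, List.drop_left' hmid]
    rw [bor] at h
    simp only [listProd_pair, listProd_triple]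
    rw [← sub_eq_zero, ← h]
    abel
  | succ n hn ih =>
    obtain ⟨e, rfl⟩ : ∃ e, n = m + 2 + e := ⟨n - (m + 2), by omega⟩
    obtain ⟨a1, rest, rfl⟩ : ∃ a t, as = a :: t := by
      cases as with
      | nil => simp at hlen
      | cons a t => exact ⟨a, t, rfl⟩
    have hrlen : rest.length = m + 2 + e := by simpa using hlen
    have ha1 : homog a1 := hhom _ (by simp)
    have hresth : ∀ x ∈ rest, homog x := fun x hx => hhom x (by simp [hx])
    have hdropne : rest.drop m ≠ [] := by
      intro hc
      have := congrArg List.length hc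
      simp [hrlen] at this
      omega
    have h := hord a1 (rest.take m) (listProd (rest.drop m))
      (by simp [hrlen]; omega) ha1 (fun x hx => hresth x (List.take_subset _ _ hx))
      (homog_listProd homog hmul _ hdropne fun x hx => hresth x (List.drop_subset _ _ hx))
    rw [bor] at h
    rw [show a1 :: (rest.take m ++ [listProd (rest.drop m)])
        = (a1 :: rest.take m) ++ [listProd (rest.drop m)] from rfl] at h
    rw [listProd_append_prod hdropne] at h
    rw [show (a1 :: rest.take m) ++ rest.drop m = a1 :: rest from by
      rw [List.cons_append, List.take_append_drop]] at h
    rw [listProd_append_prod hdropne, List.take_append_drop] at h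
    rw [mul_assoc a1] at h
    have hmain : D (listProd (a1 :: rest))
        = D (listProd (a1 :: rest.take m)) * listProd (rest.drop m)
          + (((-1 : ℤˣ) ^ (dD * deg a1) : ℤˣ) : ℤ) • (a1 * D (listProd rest))
          - (((-1 : ℤˣ) ^ (dD * deg a1) : ℤˣ) : ℤ) •
              (a1 * (D (listProd (rest.take m)) * listProd (rest.drop m))) := by
      rw [← sub_eq_zero, ← h]; abel
    have hDrest := ih rest hrlen hresth
    rw [show m + 2 + e - (m + 1) + 1 = e + 2 from by omega] at hDrest
    rw [show m + 2 + e + 1 - (m + 1) + 1 = e + 3 from by omega]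
    rw [sum_Icc_split _ 1 (e + 3) 2 (by omega) (by omega)]
    rw [sum_Icc_shift _ 1 (e + 2) 2 (e + 3) (by omega) (by omega)]
    rw [sum_Icc_split _ 2 (e + 3) 3 (by omega) (by omega)]
    rw [sum_Icc_shift _ 2 (e + 2) 3 (e + 3) (by omega) (by omega)]
    rw [hmain, hDrest, mul_sub, smul_sub, Finset.mul_sum, Finset.mul_sum,
      Finset.smul_sum, Finset.smul_sum]
    beta_reduce
    simp only [Nat.add_sub_cancel, List.drop_succ_cons]
    have c1 : (∑ x ∈ Finset.Icc 1 (e + 2),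
          (((List.map (fun a => (-1 : ℤˣ) ^ (dD * deg a)) (List.take x (a1 :: rest))).prod : ℤˣ) : ℤ) •
            listProd (List.take x (a1 :: rest) ++
              D (listProd (List.take (m + 1) (List.drop x (a1 :: rest)))) ::
                List.drop (x + (m + 1)) (a1 :: rest)))
        = ∑ x ∈ Finset.Icc 1 (e + 2),
            (((-1 : ℤˣ) ^ (dD * deg a1) : ℤˣ) : ℤ) •
              (a1 * ((((List.map (fun a => (-1 : ℤˣ) ^ (dD * deg a)) (List.take (x - 1) rest)).prod : ℤˣ) : ℤ) •
                listProd (List.take (x - 1) rest ++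
                  D (listProd (List.take (m + 1) (List.drop (x - 1) rest))) ::
                    List.drop (x - 1 + (m + 1)) rest))) := by
      refine Finset.sum_congr rfl fun x hx => ?_
      obtain ⟨j, rfl⟩ : ∃ j, x = j + 1 :=
        ⟨x - 1, by have := (Finset.mem_Icc.mp hx).1; omega⟩
      simp only [Nat.add_sub_cancel, List.drop_succ_cons]
      exact shift_term _ a1 rest j (m + 1) _
    have c2 : (∑ x ∈ Finset.Icc 2 (e + 2),
          (((List.map (fun a => (-1 : ℤˣ) ^ (dD * deg a)) (List.take x (a1 :: rest))).prod : ℤˣ) : ℤ) •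
            listProd (List.take x (a1 :: rest) ++
              D (listProd (List.take m (List.drop x (a1 :: rest)))) ::
                List.drop (x + m) (a1 :: rest)))
        = ∑ x ∈ Finset.Icc 2 (e + 2),
            (((-1 : ℤˣ) ^ (dD * deg a1) : ℤˣ) : ℤ) •
              (a1 * ((((List.map (fun a => (-1 : ℤˣ) ^ (dD * deg a)) (List.take (x - 1) rest)).prod : ℤˣ) : ℤ) •
                listProd (List.take (x - 1) rest ++
                  D (listProd (List.take m (List.drop (x - 1) rest))) ::
                    List.drop (x - 1 + m) rest))) := by
      refine Finset.sum_congr rfl fun x hx => ?_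
      obtain ⟨j, rfl⟩ : ∃ j, x = j + 1 :=
        ⟨x - 1, by have := (Finset.mem_Icc.mp hx).1; omega⟩
      simp only [Nat.add_sub_cancel, List.drop_succ_cons]
      exact shift_term _ a1 rest j m _
    rw [c1, c2]
    have hF1 : (((List.map (fun a => (-1 : ℤˣ) ^ (dD * deg a)) (List.take (1 - 1) (a1 :: rest))).prod : ℤˣ) : ℤ) •
          listProd (List.take (1 - 1) (a1 :: rest) ++
            D (listProd (List.take (m + 1) (List.drop (1 - 1) (a1 :: rest)))) ::
              List.drop (1 - 1 + (m + 1)) (a1 :: rest))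
        = D (listProd (a1 :: List.take m rest)) * listProd (List.drop m rest) := by
      simp only [show (1 : ℕ) - 1 = 0 from rfl, List.take_zero, List.drop_zero,
        List.map_nil, List.prod_nil, Units.val_one, one_smul, List.nil_append,
        Nat.zero_add, List.take_succ_cons, List.drop_succ_cons]
      rw [listProd_cons_ne _ hdropne]
    have hF2 : (((List.map (fun a => (-1 : ℤˣ) ^ (dD * deg a)) (List.take (2 - 1) (a1 :: rest))).prod : ℤˣ) : ℤ) •
          listProd (List.take (2 - 1) (a1 :: rest) ++
            D (listProd (List.take m (List.drop 0 rest))) ::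
              List.drop (2 - 1 + m) (a1 :: rest))
        = (((-1 : ℤˣ) ^ (dD * deg a1) : ℤˣ) : ℤ) •
            (a1 * (D (listProd (List.take m rest)) * listProd (List.drop m rest))) := by
      rw [show (2 : ℕ) - 1 = 1 from rfl, show List.take 1 (a1 :: rest) = [a1] from rfl,
        List.drop_zero, show (1 : ℕ) + m = m + 1 from by omega, List.drop_succ_cons]
      rw [List.map_cons, List.map_nil, List.prod_cons, List.prod_nil, mul_one]
      rw [show [a1] ++ D (listProd (List.take m rest)) :: List.drop m rest
          = a1 :: D (listProd (List.take m rest)) :: List.drop m rest from rfl]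
      rw [listProd_cons_ne _ (by simp), listProd_cons_ne _ hdropne]
    rw [hF1, hF2]
    abel
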